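/- Let R be an L×L real non-singular upper triangular matrix with pairwise distinct diagonal entries, let p_{i,j,k} denote its power factors, let e, q₀ ∈ ℝ^L, let f_opt > 0, let f₀ < f_opt be the initial fitness value with f_opt − f₀ = eᵀ q₀, and define c_k := (Σ_{i=1}^{L} Σ_{j=i}^{L} e_i p_{i,j,k} q₀(j))/f_opt for k = 1, …, L. Then for every integer t ≥ 1, the average convergence rate R_t := 1 − ((eᵀ R^t q₀)/(f_opt − f₀))^{1/t} satisfies R_t = 1 − (Σ_{k=1}^{L} c_k (λ_k)^{t-1} · f_opt/(f_opt − f₀))^{1/t}, where λ_k = r_{k,k}. -/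

import Mathlib

open Matrix Finset

/-- The power factors `p i j k` of a matrix with entries `r i j`
(indices `1, …, L`), defined recursively by: `p j j j = r j j`;
`p i j k = 0` if `k < i` or `k > j`;
`p i j k = (∑ l = k to j-1, p i l k * r l j) / (r k k - r j j)` for `i ≤ k < j`;
`p i j j = r i j - ∑ l = i to j-1, p i j l` for `i < j`. -/
noncomputable def powerFactor (r : ℕ → ℕ → ℝ) : ℕ → ℕ → ℕ → ℝ
  | i, j, k =>
    if _h0 : k < i ∨ j < k then 0
    else if _h1 : k < j then
      (∑ l ∈ (Finset.Icc k (j - 1)).attach,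
        powerFactor r i l.1 k * r l.1 j) / (r k k - r j j)
    else if _h2 : i < j then
      r i j - ∑ l ∈ (Finset.Icc i (j - 1)).attach, powerFactor r i j l.1
    else r j j
termination_by i j k => (j, k)
decreasing_by
  · have := Finset.mem_Icc.mp l.2
    exact Prod.Lex.left _ _ (by omega)
  · have := Finset.mem_Icc.mp l.2
    exact Prod.Lex.right _ (by omega)

lemma pf_zero (r : ℕ → ℕ → ℝ) {i j k : ℕ} (h : k < i ∨ j < k) : powerFactor r i j k = 0 := by
  rw [powerFactor]; simp [h]

lemma pf_mid (r : ℕ → ℕ → ℝ) {i j k : ℕ} (h0 : i ≤ k) (h1 : k < j) :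
    powerFactor r i j k =
      (∑ l ∈ Finset.Icc k (j - 1), powerFactor r i l k * r l j) / (r k k - r j j) := by
  rw [powerFactor, dif_neg (by omega), dif_pos h1,
    Finset.sum_attach _ (fun l => powerFactor r i l k * r l j)]

lemma pf_top (r : ℕ → ℕ → ℝ) {i j : ℕ} (h : i < j) :
    powerFactor r i j j = r i j - ∑ l ∈ Finset.Icc i (j - 1), powerFactor r i j l := by
  rw [powerFactor, dif_neg (by omega), dif_neg (by omega), dif_pos h, Finset.sum_attach _ (fun l => powerFactor r i j l)]

lemma pf_diag (r : ℕ → ℕ → ℝ) (j : ℕ) : powerFactor r j j j = r j j := by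
  rw [powerFactor, dif_neg (by omega), dif_neg (by omega), dif_neg (by omega)]

section
variable (L : ℕ) (r : ℕ → ℕ → ℝ)
    (htri : ∀ i j, 1 ≤ i → i ≤ L → 1 ≤ j → j ≤ L → j < i → r i j = 0)
    (hdist : ∀ i j, 1 ≤ i → i ≤ L → 1 ≤ j → j ≤ L → i ≠ j → r i i ≠ r j j)

include htri in
lemma sum_pf {i j : ℕ} (hi1 : 1 ≤ i) (hiL : i ≤ L) (hj1 : 1 ≤ j) (hjL : j ≤ L) :
    ∑ k ∈ Finset.Icc 1 L, powerFactor r i j k = r i j := by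
  have hsub : ∑ k ∈ Finset.Icc 1 L, powerFactor r i j k
      = ∑ k ∈ Finset.Icc i j, powerFactor r i j k := by
    refine (Finset.sum_subset ?_ ?_).symm
    · intro x hx; simp only [Finset.mem_Icc] at *; omega
    · intro x hx hx'; simp only [Finset.mem_Icc] at *
      exact pf_zero r (by omega)
  rw [hsub]
  rcases lt_trichotomy i j with h | h | h
  · obtain ⟨m, rfl⟩ : ∃ m, j = m + 1 := ⟨j - 1, by omega⟩
    rw [Finset.sum_Icc_succ_top (by omega), pf_top r h]
    simp
  · subst h; rw [Finset.Icc_self, Finset.sum_singleton, pf_diag]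
  · rw [Finset.Icc_eq_empty (by omega), Finset.sum_empty, htri i j hi1 hiL hj1 hjL h]

include htri hdist in
lemma key_pf {i j k : ℕ} (hi1 : 1 ≤ i) (hj1 : 1 ≤ j) (hjL : j ≤ L) (hk1 : 1 ≤ k) (hkL : k ≤ L) :
    ∑ l ∈ Finset.Icc 1 L, powerFactor r i l k * r l j = powerFactor r i j k * r k k := by
  by_cases hki : k < i
  · rw [pf_zero r (Or.inl hki)]
    rw [Finset.sum_eq_zero, zero_mul]
    intro x hx; rw [pf_zero r (Or.inl hki), zero_mul]
  by_cases hjk : j < k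
  · rw [pf_zero r (Or.inr hjk)]
    rw [Finset.sum_eq_zero, zero_mul]
    intro x hx
    simp only [Finset.mem_Icc] at hx
    by_cases hxk : x < k
    · rw [pf_zero r (Or.inr hxk), zero_mul]
    · rw [htri x j (by omega) (by omega) hj1 hjL (by omega), mul_zero]
  push_neg at hki hjk
  -- i ≤ k ≤ j
  have hsub : ∑ l ∈ Finset.Icc 1 L, powerFactor r i l k * r l j
      = ∑ l ∈ Finset.Icc k j, powerFactor r i l k * r l j := by
    refine (Finset.sum_subset ?_ ?_).symm
    · intro x hx; simp only [Finset.mem_Icc] at *; omega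
    · intro x hx hx'; simp only [Finset.mem_Icc] at *
      by_cases hxk : x < k
      · rw [pf_zero r (Or.inr hxk), zero_mul]
      · rw [htri x j (by omega) (by omega) hj1 hjL (by omega), mul_zero]
  rw [hsub]
  rcases eq_or_lt_of_le hjk with h | h
  · subst h; rw [Finset.Icc_self, Finset.sum_singleton]
  · obtain ⟨m, rfl⟩ : ∃ m, j = m + 1 := ⟨j - 1, by omega⟩
    rw [Finset.sum_Icc_succ_top (by omega)]
    have hne : r k k - r (m + 1) (m + 1) ≠ 0 := by
      have := hdist k (m + 1) hk1 hkL hj1 hjL (by omega)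
      intro hcon; exact this (by linarith)
    have hmid := pf_mid r hki h
    simp only [Nat.add_sub_cancel] at hmid
    rw [hmid]; field_simp; ring
end

lemma fin_sum_icc {L : ℕ} (g : ℕ → ℝ) :
    ∑ l : Fin L, g (l.1 + 1) = ∑ l ∈ Finset.Icc 1 L, g l := by
  rw [Fin.sum_univ_eq_sum_range (fun l => g (l + 1)),
    show Finset.Icc 1 L = Finset.Ico 1 (L+1) from (Finset.Ico_add_one_right_eq_Icc 1 L).symm,
    Finset.sum_Ico_eq_sum_range]
  simp [Nat.add_comm]

section
variable (L : ℕ) (r : ℕ → ℕ → ℝ)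
    (htri : ∀ i j, 1 ≤ i → i ≤ L → 1 ≤ j → j ≤ L → j < i → r i j = 0)
    (hdist : ∀ i j, 1 ≤ i → i ≤ L → 1 ≤ j → j ≤ L → i ≠ j → r i i ≠ r j j)

include htri hdist in
lemma pow_entry (R : Matrix (Fin L) (Fin L) ℝ)
    (hR : R = Matrix.of fun a b : Fin L => r (a.val + 1) (b.val + 1)) :
    ∀ t : ℕ, 1 ≤ t → ∀ a b : Fin L,
      (R ^ t) a b = ∑ k ∈ Finset.Icc 1 L,
        powerFactor r (a.1 + 1) (b.1 + 1) k * (r k k) ^ (t - 1) := by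
  intro t
  induction t with
  | zero => omega
  | succ t ih =>
    intro _ a b
    rcases Nat.eq_zero_or_pos t with rfl | ht
    · simp only [zero_add, pow_one, hR, Matrix.of_apply, Nat.add_sub_cancel, Nat.sub_self, pow_zero, mul_one]
      exact (sum_pf L r htri (Nat.le_add_left 1 a.1) a.2 (Nat.le_add_left 1 b.1) b.2).symm
    · rw [pow_succ, Matrix.mul_apply]
      have h1 : ∀ l : Fin L, (R ^ t) a l * R l b
          = ∑ k ∈ Finset.Icc 1 L,
              powerFactor r (a.1+1) (l.1+1) k * r (l.1+1) (b.1+1) * (r k k)^(t-1) := by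
        intro l
        rw [ih ht, Finset.sum_mul]
        refine Finset.sum_congr rfl fun k _ => ?_
        rw [hR]; simp only [Matrix.of_apply]; ring
      simp only [h1]
      rw [Finset.sum_comm]
      refine Finset.sum_congr rfl fun k hk => ?_
      simp only [Finset.mem_Icc] at hk
      rw [← Finset.sum_mul,
        fin_sum_icc (fun l => powerFactor r (a.1+1) l k * r l (b.1+1)),
        key_pf L r htri hdist (Nat.le_add_left 1 a.1) (Nat.le_add_left 1 b.1) b.2 hk.1 hk.2]
      have ht' : t + 1 - 1 = (t - 1) + 1 := by omega
      rw [ht', pow_succ]; ring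
end

/-- Corollary 2: under the same setting as Theorem 1, with
initial fitness `f₀ < f_opt` satisfying `f_opt − f₀ = eᵀ q₀`, the average
convergence rate `R t = 1 − ((eᵀ R^t q₀)/(f_opt − f₀))^(1/t)` satisfies, for
every `t ≥ 1`,
`R t = 1 − (∑_{k=1}^{L} c k * (λ k)^(t-1) * f_opt/(f_opt − f₀))^(1/t)`
where `λ k = r k k`. -/
theorem average_convergence_rate_closed_form
    (L : ℕ) (hL : 1 ≤ L) (r : ℕ → ℕ → ℝ)
    (htri : ∀ i j, 1 ≤ i → i ≤ L → 1 ≤ j → j ≤ L → j < i → r i j = 0)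
    (hnonsing : ∀ i, 1 ≤ i → i ≤ L → r i i ≠ 0)
    (hdist : ∀ i j, 1 ≤ i → i ≤ L → 1 ≤ j → j ≤ L → i ≠ j → r i i ≠ r j j)
    (R : Matrix (Fin L) (Fin L) ℝ)
    (hR : R = Matrix.of fun a b : Fin L => r (a.val + 1) (b.val + 1))
    (e q₀ : ℕ → ℝ) (fopt f₀ : ℝ) (hfopt : 0 < fopt) (hf₀ : f₀ < fopt)
    (hinit : fopt - f₀ =
      (fun a : Fin L => e (a.val + 1)) ⬝ᵥ (fun a : Fin L => q₀ (a.val + 1)))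
    (Rate : ℕ → ℝ)
    (hRate : ∀ t : ℕ, Rate t = 1 -
      (((fun a : Fin L => e (a.val + 1)) ⬝ᵥ
        ((R ^ t) *ᵥ fun a : Fin L => q₀ (a.val + 1))) / (fopt - f₀))
        ^ ((1 : ℝ) / t))
    (c : ℕ → ℝ)
    (hc : ∀ k, c k =
      (∑ i ∈ Finset.Icc 1 L, ∑ j ∈ Finset.Icc i L,
        e i * powerFactor r i j k * q₀ j) / fopt) :
    ∀ t : ℕ, 1 ≤ t →
      Rate t = 1 - ((∑ k ∈ Finset.Icc 1 L, c k * (r k k) ^ (t - 1)) *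
        fopt / (fopt - f₀)) ^ ((1 : ℝ) / t) := by
  intro t ht
  have hkey := pow_entry L r htri hdist R hR t ht
  have hc' : ∀ k, c k * fopt = ∑ i ∈ Finset.Icc 1 L, ∑ j ∈ Finset.Icc i L,
      e i * powerFactor r i j k * q₀ j := by
    intro k; rw [hc k, div_mul_cancel₀ _ (ne_of_gt hfopt)]
  have hnum : ((fun a : Fin L => e (a.1+1)) ⬝ᵥ ((R ^ t) *ᵥ fun a : Fin L => q₀ (a.1+1)))
      = (∑ k ∈ Finset.Icc 1 L, c k * (r k k) ^ (t-1)) * fopt := by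
    calc (fun a : Fin L => e (a.1+1)) ⬝ᵥ ((R ^ t) *ᵥ fun a : Fin L => q₀ (a.1+1))
        = ∑ a : Fin L, ∑ b : Fin L, ∑ k ∈ Finset.Icc 1 L,
            e (a.1+1) * powerFactor r (a.1+1) (b.1+1) k * q₀ (b.1+1) * (r k k)^(t-1) := by
          simp only [dotProduct, Matrix.mulVec, hkey, Finset.mul_sum, Finset.sum_mul]
          refine Finset.sum_congr rfl fun a _ => Finset.sum_congr rfl fun b _ =>
            Finset.sum_congr rfl fun k _ => by ring
      _ = ∑ k ∈ Finset.Icc 1 L, ∑ a : Fin L, ∑ b : Fin L,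
            e (a.1+1) * powerFactor r (a.1+1) (b.1+1) k * q₀ (b.1+1) * (r k k)^(t-1) := by
          have h : ∀ (f : Fin L → Fin L → ℕ → ℝ),
              ∑ a : Fin L, ∑ b : Fin L, ∑ k ∈ Finset.Icc 1 L, f a b k
              = ∑ k ∈ Finset.Icc 1 L, ∑ a : Fin L, ∑ b : Fin L, f a b k := by
            intro f
            calc ∑ a : Fin L, ∑ b : Fin L, ∑ k ∈ Finset.Icc 1 L, f a b k
                = ∑ a : Fin L, ∑ k ∈ Finset.Icc 1 L, ∑ b : Fin L, f a b k :=
                  Finset.sum_congr rfl fun a _ => Finset.sum_comm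
              _ = ∑ k ∈ Finset.Icc 1 L, ∑ a : Fin L, ∑ b : Fin L, f a b k :=
                  Finset.sum_comm
          exact h _
      _ = ∑ k ∈ Finset.Icc 1 L, (∑ i ∈ Finset.Icc 1 L, ∑ j ∈ Finset.Icc 1 L,
            e i * powerFactor r i j k * q₀ j) * (r k k)^(t-1) := by
          refine Finset.sum_congr rfl fun k _ => ?_
          rw [Finset.sum_mul]
          refine Eq.trans ?_ (fin_sum_icc (fun i => (∑ j ∈ Finset.Icc 1 L,
            e i * powerFactor r i j k * q₀ j) * (r k k)^(t-1)))
          refine Finset.sum_congr rfl fun a _ => ?_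
          rw [Finset.sum_mul]
          exact fin_sum_icc (fun j => e (a.1+1) * powerFactor r (a.1+1) j k * q₀ j
            * (r k k)^(t-1))
      _ = ∑ k ∈ Finset.Icc 1 L, (∑ i ∈ Finset.Icc 1 L, ∑ j ∈ Finset.Icc i L,
            e i * powerFactor r i j k * q₀ j) * (r k k)^(t-1) := by
          refine Finset.sum_congr rfl fun k _ => ?_
          congr 1
          refine Finset.sum_congr rfl fun i hi => ?_
          simp only [Finset.mem_Icc] at hi
          refine (Finset.sum_subset ?_ ?_).symm
          · intro x hx; simp only [Finset.mem_Icc] at *; omega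
          · intro x hx hx'; simp only [Finset.mem_Icc] at hx hx'
            have : powerFactor r i x k = 0 := by
              rcases lt_or_ge k i with h | h
              · exact pf_zero r (Or.inl h)
              · exact pf_zero r (Or.inr (by omega))
            rw [this]; ring
      _ = (∑ k ∈ Finset.Icc 1 L, c k * (r k k) ^ (t-1)) * fopt := by
          rw [Finset.sum_mul]
          exact Finset.sum_congr rfl fun k _ => by rw [← hc' k]; ring
  rw [hRate t, hnum]
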